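/- Let d, k, r be integers with d ≥ k ≥ 2 and k ≤ r, let B > 0 be real, and let β₁, β₂ ≥ 0 be reals satisfying B ≤ (d·k − k·(k−1)/2)·β₁ + (r·k − k)·β₂ and B ≤ d·k·β₁ + (r−k)·k·β₂. If d·β₁ + (r−1)·β₂ = B·(2d+r−1)/(k·(2d+r−k)), then β₁ = 2B/(k·(2d+r−k)) and β₂ = B/(k·(2d+r−k)). -/

import Mathlib

/-- Case 1 (k ≤ r) of the proof of Theorem 1: if the repair bandwidth meets the lower
bound, then (β₁, β₂) must be the vertex point of the polyhedral feasible region. -/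
theorem case_one_uniqueness
    (d k r : ℤ) (hdk : k ≤ d) (hk : 2 ≤ k) (hkr : k ≤ r)
    (B β₁ β₂ : ℝ) (hB : 0 < B) (hβ₁ : 0 ≤ β₁) (hβ₂ : 0 ≤ β₂)
    (h1 : B ≤ ((d : ℝ) * k - (k : ℝ) * ((k : ℝ) - 1) / 2) * β₁ + ((r : ℝ) * k - k) * β₂)
    (h2 : B ≤ (d : ℝ) * k * β₁ + ((r : ℝ) - k) * k * β₂)
    (heq : (d : ℝ) * β₁ + ((r : ℝ) - 1) * β₂
           = B * (2 * (d : ℝ) + r - 1) / ((k : ℝ) * (2 * d + r - k))) :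
    β₁ = 2 * B / ((k : ℝ) * (2 * d + r - k)) ∧ β₂ = B / ((k : ℝ) * (2 * d + r - k)) := by
  have hk' : (2:ℝ) ≤ (k:ℝ) := by exact_mod_cast hk
  have hd' : (k:ℝ) ≤ (d:ℝ) := by exact_mod_cast hdk
  have hr' : (k:ℝ) ≤ (r:ℝ) := by exact_mod_cast hkr
  have hM : 0 < (k:ℝ) * (2 * d + r - k) := by nlinarith
  have hMne : (k:ℝ) * (2 * d + r - k) ≠ 0 := ne_of_gt hM
  -- clear the denominator in heq
  have heqM : ((d:ℝ) * β₁ + ((r:ℝ) - 1) * β₂) * ((k:ℝ) * (2 * d + r - k))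
      = B * (2 * (d:ℝ) + r - 1) := by
    rw [eq_div_iff hMne] at heq
    linarith [heq]
  -- dual multipliers 2d > 0 and (r-1) > 0
  have hdpos : 0 < 2 * (d:ℝ) := by linarith
  have hrpos : 0 < (r:ℝ) - 1 := by linarith
  have p1 : 0 ≤ 2 * (d:ℝ) *
      ((((d:ℝ) * k - (k:ℝ) * ((k:ℝ) - 1) / 2) * β₁ + ((r:ℝ) * k - k) * β₂) - B) :=
    mul_nonneg (le_of_lt hdpos) (by linarith)
  have p2 : 0 ≤ ((r:ℝ) - 1) *
      (((d:ℝ) * k * β₁ + ((r:ℝ) - k) * k * β₂) - B) :=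
    mul_nonneg (le_of_lt hrpos) (by linarith)
  have sum0 : 2 * (d:ℝ) *
      ((((d:ℝ) * k - (k:ℝ) * ((k:ℝ) - 1) / 2) * β₁ + ((r:ℝ) * k - k) * β₂) - B)
      + ((r:ℝ) - 1) *
      (((d:ℝ) * k * β₁ + ((r:ℝ) - k) * k * β₂) - B) = 0 := by
    linear_combination heqM
  have e1 : ((d:ℝ) * k - (k:ℝ) * ((k:ℝ) - 1) / 2) * β₁ + ((r:ℝ) * k - k) * β₂ = B := by
    have hz : 2 * (d:ℝ) *
        ((((d:ℝ) * k - (k:ℝ) * ((k:ℝ) - 1) / 2) * β₁ + ((r:ℝ) * k - k) * β₂) - B) = 0 := by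
      linarith
    rcases mul_eq_zero.1 hz with h | h
    · linarith
    · linarith
  have e2 : (d:ℝ) * k * β₁ + ((r:ℝ) - k) * k * β₂ = B := by
    have hz : ((r:ℝ) - 1) *
        (((d:ℝ) * k * β₁ + ((r:ℝ) - k) * k * β₂) - B) = 0 := by linarith
    rcases mul_eq_zero.1 hz with h | h
    · linarith
    · linarith
  -- subtracting gives β₁ = 2β₂
  have h3 : (k:ℝ) * ((k:ℝ) - 1) / 2 * (β₁ - 2 * β₂) = 0 := by
    linear_combination e2 - e1
  have hkk : (k:ℝ) * ((k:ℝ) - 1) / 2 ≠ 0 := by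
    have : (0:ℝ) < (k:ℝ) * ((k:ℝ) - 1) / 2 := by nlinarith
    exact ne_of_gt this
  have hb : β₁ = 2 * β₂ := by
    rcases mul_eq_zero.1 h3 with h | h
    · exact absurd h hkk
    · linarith
  have hβ₂eq : β₂ = B / ((k:ℝ) * (2 * d + r - k)) := by
    rw [eq_div_iff hMne]
    rw [hb] at e2
    linear_combination e2
  refine ⟨?_, hβ₂eq⟩
  rw [hb, hβ₂eq]; ring
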